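/- arXiv:2309.00484 — 3 statements merged into one kernel-verified Lean document; each statement's English description precedes it below -/
import Mathlib

section
/- The equation A(α, 1−α) = 0, where A(α, 1−α) = 2π (1/(α sin(πα/2)) + 1/((α−1) cos(πα/2))), has infinitely many real roots that are not natural numbers. -/
open Real MeasureTheory

/-- Kummer's confluent hypergeometric function ₁F₁(a;b;z). -/
noncomputable def kummerM (a b z : ℝ) : ℝ :=
  ∑' n : ℕ, ((ascPochhammer ℝ n).eval a * z ^ n) / ((ascPochhammer ℝ n).eval b * (n.factorial : ℝ))

/-- The parabolic cylinder function `U(b, z)`, defined via Kummer functions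
(Abramowitz–Stegun 19.12.1 with `b = -α - 1/2`). -/
noncomputable def pcU (b z : ℝ) : ℝ :=
  let α : ℝ := -b - 1/2
  (1 / Real.sqrt π) * (2 : ℝ) ^ (α / 2) * Real.exp (-z ^ 2 / 4) *
    (Real.cos (π * α / 2) * Real.Gamma ((α + 1) / 2) * kummerM (-α / 2) (1/2) (z ^ 2 / 2) +
      Real.sqrt 2 * z * Real.sin (π * α / 2) * Real.Gamma (α / 2 + 1) *
        kummerM (1/2 - α / 2) (3/2) (z ^ 2 / 2))

/-- Whittaker's form `D_a(z) = U(-a - 1/2, z)`. -/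
noncomputable def pcD (a z : ℝ) : ℝ := pcU (-a - 1/2) z

/-- The power-normalised parabolic cylinder function
`H_α(x,t) = t^{α/2} e^{x²/(4t)} D_α(x/√t)`. -/
noncomputable def Hfrac (α x t : ℝ) : ℝ :=
  t ^ (α / 2) * Real.exp (x ^ 2 / (4 * t)) * pcD α (x / Real.sqrt t)


noncomputable def gfun (α : ℝ) : ℝ := (α - 1) * Real.cos (π * α / 2) + α * Real.sin (π * α / 2)

lemma gfun_cont : Continuous gfun := by
  unfold gfun; fun_prop

lemma root_exists (M : ℕ) (hM : 1 ≤ M) :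
    ∃ c ∈ Set.Ioo ((1:ℝ) - 4 * M) (2 - 4 * M), gfun c = 0 := by
  set a : ℝ := 1 - 4 * M
  set b : ℝ := 2 - 4 * M
  have hab : a ≤ b := by simp only [a, b]; linarith
  have ha : gfun a = a := by
    have h1 : π * a / 2 = π / 2 + ((-(M:ℤ) : ℤ) : ℝ) * (2 * π) := by simp only [a]; push_cast; ring
    unfold gfun
    rw [h1, Real.cos_add_int_mul_two_pi, Real.sin_add_int_mul_two_pi,
      Real.cos_pi_div_two, Real.sin_pi_div_two]
    ring
  have hb : gfun b = 1 - b := by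
    have h1 : π * b / 2 = π + ((-(M:ℤ) : ℤ) : ℝ) * (2 * π) := by simp only [b]; push_cast; ring
    unfold gfun
    rw [h1, Real.cos_add_int_mul_two_pi, Real.sin_add_int_mul_two_pi,
      Real.cos_pi, Real.sin_pi]
    ring
  have hM' : (1:ℝ) ≤ M := by exact_mod_cast hM
  have h0 : (0:ℝ) ∈ Set.Ioo (gfun a) (gfun b) := by
    rw [ha, hb]; constructor <;> simp only [a, b] <;> linarith
  have := intermediate_value_Ioo hab (gfun_cont.continuousOn)
  obtain ⟨c, hc, hgc⟩ := this h0
  exact ⟨c, hc, hgc⟩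

lemma sin_pos_of_mem (M : ℕ) (c : ℝ) (hc : c ∈ Set.Ioo ((1:ℝ) - 4 * M) (2 - 4 * M)) :
    0 < Real.sin (π * c / 2) := by
  have h : Real.sin (π * c / 2) = Real.sin (π * c / 2 + ((M:ℤ) : ℝ) * (2 * π)) := by
    rw [Real.sin_add_int_mul_two_pi]
  rw [h]
  apply Real.sin_pos_of_pos_of_lt_pi
  · have := hc.1
    have hπ := Real.pi_pos
    push_cast
    nlinarith [hc.1]
  · have hπ := Real.pi_pos
    push_cast
    nlinarith [hc.2]

lemma cos_neg_of_mem (M : ℕ) (c : ℝ) (hc : c ∈ Set.Ioo ((1:ℝ) - 4 * M) (2 - 4 * M)) :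
    Real.cos (π * c / 2) < 0 := by
  have h : Real.cos (π * c / 2) = Real.cos (π * c / 2 + ((M:ℤ) : ℝ) * (2 * π)) := by
    rw [Real.cos_add_int_mul_two_pi]
  rw [h]
  apply Real.cos_neg_of_pi_div_two_lt_of_lt
  · have hπ := Real.pi_pos
    push_cast
    nlinarith [hc.1]
  · have hπ := Real.pi_pos
    push_cast
    nlinarith [hc.2]

theorem stmt7 :
    {α : ℝ | (∀ n : ℕ, α ≠ n) ∧
      2 * π * (1 / (α * Real.sin (π * α / 2)) + 1 / ((α - 1) * Real.cos (π * α / 2))) = 0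
      }.Infinite := by
  apply Set.infinite_of_injective_forall_mem
    (f := fun m : ℕ => (root_exists (m + 1) (by omega)).choose)
  · intro m m' hmm
    dsimp only at hmm
    by_contra hne
    wlog hlt : m < m' generalizing m m'
    · exact this (m := m') (m' := m) hmm.symm (Ne.symm hne) (by omega)
    have h1 := (root_exists (m + 1) (by omega)).choose_spec.1
    have h2 := (root_exists (m' + 1) (by omega)).choose_spec.1
    rw [hmm] at h1
    have hA := h1.1
    have hB := h2.2
    have : (m:ℝ) + 1 ≤ m' := by exact_mod_cast Nat.succ_le_of_lt hlt
    push_cast at hA hB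
    linarith
  · intro m
    obtain ⟨hc, hgc⟩ := (root_exists (m + 1) (by omega)).choose_spec
    set c := (root_exists (m + 1) (by omega)).choose
    have hs := sin_pos_of_mem (m + 1) c hc
    have hco := cos_neg_of_mem (m + 1) c hc
    have hm1 : (1:ℝ) ≤ (m:ℝ) + 1 := by have : (0:ℝ) ≤ m := Nat.cast_nonneg m; linarith
    have hcneg : c < 0 := by
      have := hc.2; push_cast at this; linarith
    constructor
    · intro n hn
      have : (0:ℝ) ≤ n := Nat.cast_nonneg n
      linarith [hn ▸ hcneg]
    · have hA : c * Real.sin (π * c / 2) ≠ 0 := by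
        apply ne_of_lt; exact mul_neg_of_neg_of_pos hcneg hs
      have hB : (c - 1) * Real.cos (π * c / 2) ≠ 0 := by
        apply ne_of_gt; exact mul_pos_of_neg_of_neg (by linarith) hco
      rw [div_add_div _ _ hA hB]
      have hg : (c - 1) * Real.cos (π * c / 2) + c * Real.sin (π * c / 2) = 0 := hgc
      have hnum : 1 * ((c - 1) * Real.cos (π * c / 2)) + c * Real.sin (π * c / 2) * 1 = 0 := by
        linarith
      rw [hnum, zero_div, mul_zero]
end

section
/- For any nonnegative integer m, real a, and all z, (d/dz)^m (e^{−z²/4} D_a(z)) = (−1)^m e^{−z²/4} D_{a+m}(z), where D_a is the parabolic cylinder function. -/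
open Real MeasureTheory

lemma poch_eval_succ_left (x : ℝ) (n : ℕ) :
    (ascPochhammer ℝ (n+1)).eval x = x * (ascPochhammer ℝ n).eval (x+1) := by
  rw [ascPochhammer_succ_left]
  simp [Polynomial.eval_comp]

lemma poch_pos {β : ℝ} (hβ : 0 < β) (n : ℕ) : 0 < (ascPochhammer ℝ n).eval β := by
  induction n with
  | zero => simp
  | succ n ih =>
    rw [ascPochhammer_succ_eval]
    positivity

noncomputable def mcoef (α β : ℝ) (n : ℕ) : ℝ :=
  (ascPochhammer ℝ n).eval α / ((ascPochhammer ℝ n).eval β * n.factorial)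

lemma kummerM_eq_tsum (α β u : ℝ) : kummerM α β u = ∑' n, mcoef α β n * u ^ n := by
  refine tsum_congr fun n => ?_
  rw [mcoef, div_mul_eq_mul_div]

lemma mcoef_zero (α β : ℝ) : mcoef α β 0 = 1 := by simp [mcoef]

lemma mcoef_succ (α : ℝ) {β : ℝ} (hβ : 0 < β) (n : ℕ) :
    mcoef α β (n+1) = mcoef α β n * ((α + n) / ((β + n) * (n+1))) := by
  have h1 : (ascPochhammer ℝ n).eval β ≠ 0 := (poch_pos hβ n).ne'
  have h2 : (β + n) ≠ 0 := by positivity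
  have h3 : (n.factorial : ℝ) ≠ 0 := Nat.cast_ne_zero.2 n.factorial_ne_zero
  have h4 : ((n:ℝ) + 1) ≠ 0 := by positivity
  rw [mcoef, mcoef, ascPochhammer_succ_eval, ascPochhammer_succ_eval, Nat.factorial_succ]
  push_cast
  rw [div_mul_div_comm]
  congr 1
  push_cast
  ring

lemma summable_abs_mcoef (α : ℝ) {β : ℝ} (hβ : 0 < β) (u : ℝ) :
    Summable fun n => |mcoef α β n * u ^ n| := by
  apply summable_of_ratio_norm_eventually_le (r := 1/2) (by norm_num)
  filter_upwards [Filter.eventually_ge_atTop ⌈max |α| (4 * |u|)⌉₊] with n hn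
  have hmax : max |α| (4 * |u|) ≤ n := le_trans (Nat.le_ceil _) (Nat.cast_le.2 hn)
  have hα : |α| ≤ n := le_trans (le_max_left _ _) hmax
  have hu : 4 * |u| ≤ n := le_trans (le_max_right _ _) hmax
  have hb : (0:ℝ) < (β + n) * (n + 1) := by positivity
  have key : |mcoef α β (n+1) * u ^ (n+1)| =
      |mcoef α β n * u ^ n| * (|α + n| * |u| / ((β + n) * (n + 1))) := by
    rw [mcoef_succ α hβ n]
    rw [abs_mul, abs_mul, abs_mul, abs_div, abs_mul, pow_succ, abs_mul]
    rw [abs_of_pos (by positivity : (0:ℝ) < β + n), abs_of_pos (by positivity : (0:ℝ) < (n:ℝ) + 1)]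
    ring
  rw [Real.norm_eq_abs, Real.norm_eq_abs, abs_abs, abs_abs, key]
  have hfrac : |α + n| * |u| / ((β + n) * (n + 1)) ≤ 1/2 := by
    rw [div_le_iff₀ hb]
    have h1 : |α + n| ≤ 2 * n := by
      have h2 : |α + (n:ℝ)| ≤ |α| + |(n:ℝ)| := abs_add_le _ _
      rw [Nat.abs_cast] at h2
      linarith
    nlinarith [abs_nonneg u, abs_nonneg (α + (n:ℝ)), Nat.cast_nonneg (α := ℝ) n]
  calc |mcoef α β n * u ^ n| * (|α + n| * |u| / ((β + n) * (n + 1)))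
      ≤ |mcoef α β n * u ^ n| * (1/2) := by
        exact mul_le_mul_of_nonneg_left hfrac (abs_nonneg _)
    _ = 1/2 * |mcoef α β n * u ^ n| := by ring

lemma summable_mcoef_mul (α : ℝ) {β : ℝ} (hβ : 0 < β) (u : ℝ) :
    Summable fun n => mcoef α β n * u ^ n :=
  (summable_abs_mcoef α hβ u).of_abs

noncomputable def evenC (a : ℝ) : ℝ := Real.cos (π * a / 2) * Real.Gamma ((a + 1) / 2)
noncomputable def oddC (a : ℝ) : ℝ := Real.sqrt 2 * Real.sin (π * a / 2) * Real.Gamma (a / 2 + 1)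

noncomputable def pcoef (a : ℝ) (k : ℕ) : ℝ :=
  if k % 2 = 0 then evenC a * mcoef (-a/2) (1/2) (k/2) / 2 ^ (k/2)
  else oddC a * mcoef ((1-a)/2) (3/2) (k/2) / 2 ^ (k/2)

lemma pcoef_even (a : ℝ) (n : ℕ) :
    pcoef a (2*n) = evenC a * mcoef (-a/2) (1/2) n / 2 ^ n := by
  have h1 : (2*n) % 2 = 0 := by omega
  have h2 : (2*n) / 2 = n := by omega
  simp [pcoef, h1, h2]

lemma pcoef_odd (a : ℝ) (n : ℕ) :
    pcoef a (2*n+1) = oddC a * mcoef ((1-a)/2) (3/2) n / 2 ^ n := by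
  have h1 : (2*n+1) % 2 = 1 := by omega
  have h2 : (2*n+1) / 2 = n := by omega
  simp [pcoef, h1, h2]

lemma L1 (a : ℝ) : Real.sqrt 2 * oddC (a+1) = (a+1) * evenC a := by
  unfold oddC evenC
  rw [show π * (a+1) / 2 = π * a / 2 + π / 2 by ring, Real.sin_add_pi_div_two]
  have h2 : Real.sqrt 2 * Real.sqrt 2 = 2 := Real.mul_self_sqrt (by norm_num)
  rcases eq_or_ne a (-1) with rfl | ha
  · have hc : Real.cos (π * (-1) / 2) = 0 := by
      rw [show π * (-1) / 2 = -(π/2) by ring, Real.cos_neg, Real.cos_pi_div_two]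
    rw [hc]
    norm_num
  · rw [Real.Gamma_add_one (by intro h; apply ha; field_simp at h; linarith)]
    linear_combination (Real.cos (π * a / 2) * Real.Gamma ((a+1)/2) * (a+1) / 2) * h2

lemma L2 (a : ℝ) : Real.sqrt 2 * evenC (a+1) = -oddC a := by
  unfold oddC evenC
  rw [show π * (a+1) / 2 = π * a / 2 + π / 2 by ring, Real.cos_add_pi_div_two]
  rw [show (a+1+1)/2 = a/2 + 1 by ring]
  ring

lemma A0 (a : ℝ) : 1 * pcoef a 1 + Real.sqrt 2 * pcoef (a+1) 0 = 0 := by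
  have h1 : pcoef a 1 = oddC a := by
    have : pcoef a (2*0+1) = oddC a * mcoef ((1-a)/2) (3/2) 0 / 2 ^ 0 := pcoef_odd a 0
    simpa [mcoef_zero] using this
  have h2 : pcoef (a+1) 0 = evenC (a+1) := by
    have : pcoef (a+1) (2*0) = evenC (a+1) * mcoef (-(a+1)/2) (1/2) 0 / 2 ^ 0 := pcoef_even (a+1) 0
    simpa [mcoef_zero] using this
  rw [h1, h2, one_mul, L2]
  ring

lemma Arec (a : ℝ) (k : ℕ) :
    ((k:ℝ)+2) * pcoef a (k+2) + Real.sqrt 2 * pcoef (a+1) (k+1) = pcoef a k := by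
  rcases Nat.even_or_odd k with ⟨n, rfl⟩ | ⟨n, rfl⟩
  · -- k = n + n = 2*n
    rw [show n + n = 2*n by ring]
    rw [show 2*n+2 = 2*(n+1) by ring, show 2*n+1 = 2*n+1 from rfl]
    rw [pcoef_even a (n+1), pcoef_odd (a+1) n, pcoef_even a n]
    rw [show (1-(a+1))/2 = -a/2 by ring]
    have e1 : (ascPochhammer ℝ (n+1)).eval (-a/2) =
        (ascPochhammer ℝ n).eval (-a/2) * (-a/2 + n) := ascPochhammer_succ_eval n _
    have e2 : (ascPochhammer ℝ (n+1)).eval (1/2 : ℝ) =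
        (ascPochhammer ℝ n).eval (1/2 : ℝ) * (1/2 + n) := ascPochhammer_succ_eval n _
    have e3 : (ascPochhammer ℝ n).eval (3/2 : ℝ) =
        2 * ((ascPochhammer ℝ n).eval (1/2 : ℝ) * (1/2 + n)) := by
      have h := poch_eval_succ_left (1/2 : ℝ) n
      rw [show (1/2 : ℝ) + 1 = 3/2 by norm_num] at h
      rw [e2] at h
      linarith
    rw [show Real.sqrt 2 * (oddC (a+1) * mcoef (-a/2) (3/2) n / 2 ^ n)
        = (Real.sqrt 2 * oddC (a+1)) * (mcoef (-a/2) (3/2) n / 2 ^ n) by ring, L1]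
    unfold mcoef
    rw [e1, e2, e3, Nat.factorial_succ]
    have hP : (0:ℝ) < (ascPochhammer ℝ n).eval (1/2 : ℝ) := poch_pos (by norm_num) n
    have hF : ((n.factorial : ℝ)) ≠ 0 := Nat.cast_ne_zero.2 n.factorial_ne_zero
    have hn1 : ((n:ℝ) + 1) ≠ 0 := by positivity
    have hhn : ((1:ℝ)/2 + n) ≠ 0 := by positivity
    have h2n : ((2:ℝ)) ^ n ≠ 0 := by positivity
    push_cast
    field_simp
    ring
  · -- k = 2*n + 1
    rw [show 2*n+1+2 = 2*(n+1)+1 by ring, show 2*n+1+1 = 2*(n+1) by ring]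
    rw [pcoef_odd a (n+1), pcoef_even (a+1) (n+1), pcoef_odd a n]
    rw [show -(a+1)/2 = (1-a)/2 - 1 by ring]
    have e1 : (ascPochhammer ℝ (n+1)).eval ((1-a)/2) =
        (ascPochhammer ℝ n).eval ((1-a)/2) * ((1-a)/2 + n) := ascPochhammer_succ_eval n _
    have e2 : (ascPochhammer ℝ (n+1)).eval ((3:ℝ)/2) =
        (ascPochhammer ℝ n).eval ((3:ℝ)/2) * (3/2 + n) := ascPochhammer_succ_eval n _
    have e3 : (ascPochhammer ℝ (n+1)).eval ((1:ℝ)/2) =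
        (1/2) * (ascPochhammer ℝ n).eval ((3:ℝ)/2) := by
      have h := poch_eval_succ_left (1/2 : ℝ) n
      rw [show (1/2 : ℝ) + 1 = 3/2 by norm_num] at h
      exact h
    have e4 : (ascPochhammer ℝ (n+1)).eval ((1-a)/2 - 1) =
        ((1-a)/2 - 1) * (ascPochhammer ℝ n).eval ((1-a)/2) := by
      have h := poch_eval_succ_left ((1-a)/2 - 1) n
      rw [show (1-a)/2 - 1 + 1 = (1-a)/2 by ring] at h
      exact h
    rw [show Real.sqrt 2 * (evenC (a+1) * mcoef ((1-a)/2 - 1) (1/2) (n+1) / 2 ^ (n+1))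
        = (Real.sqrt 2 * evenC (a+1)) * (mcoef ((1-a)/2 - 1) (1/2) (n+1) / 2 ^ (n+1)) by ring, L2]
    unfold mcoef
    rw [e1, e2, e3, e4, Nat.factorial_succ]
    have hP : (0:ℝ) < (ascPochhammer ℝ n).eval ((3:ℝ)/2) := poch_pos (by norm_num) n
    have hF : ((n.factorial : ℝ)) ≠ 0 := Nat.cast_ne_zero.2 n.factorial_ne_zero
    have hn1 : ((n:ℝ) + 1) ≠ 0 := by positivity
    have hhn : ((3:ℝ)/2 + n) ≠ 0 := by positivity
    have h2n : ((2:ℝ)) ^ n ≠ 0 := by positivity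
    push_cast
    field_simp
    ring

noncomputable def Sfun (a z : ℝ) : ℝ := ∑' k, pcoef a k * z ^ k

lemma even_term_eq (a z : ℝ) (n : ℕ) :
    pcoef a (2*n) * z ^ (2*n) = evenC a * (mcoef (-a/2) (1/2) n * (z^2/2) ^ n) := by
  rw [pcoef_even, pow_mul, div_pow]
  ring

lemma odd_term_eq (a z : ℝ) (n : ℕ) :
    pcoef a (2*n+1) * z ^ (2*n+1) = (oddC a * z) * (mcoef ((1-a)/2) (3/2) n * (z^2/2) ^ n) := by
  rw [pcoef_odd, pow_succ, pow_mul, div_pow]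
  ring

lemma summable_abs_pcoef (a v : ℝ) : Summable fun k => |pcoef a k * v ^ k| := by
  have he : Summable fun n => |pcoef a (2*n) * v ^ (2*n)| := by
    have : (fun n => |pcoef a (2*n) * v ^ (2*n)|)
        = fun n => |evenC a| * |mcoef (-a/2) (1/2) n * (v^2/2) ^ n| := by
      funext n; rw [even_term_eq, abs_mul]
    rw [this]
    exact (summable_abs_mcoef (-a/2) (β := 1/2) (by norm_num) (v^2/2)).mul_left _
  have ho : Summable fun n => |pcoef a (2*n+1) * v ^ (2*n+1)| := by
    have : (fun n => |pcoef a (2*n+1) * v ^ (2*n+1)|)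
        = fun n => |oddC a * v| * |mcoef ((1-a)/2) (3/2) n * (v^2/2) ^ n| := by
      funext n; rw [odd_term_eq, abs_mul]
    rw [this]
    exact (summable_abs_mcoef ((1-a)/2) (β := 3/2) (by norm_num) (v^2/2)).mul_left _
  exact (HasSum.even_add_odd (f := fun k => |pcoef a k * v ^ k|) he.hasSum ho.hasSum).summable

lemma summable_pcoef (a v : ℝ) : Summable fun k => pcoef a k * v ^ k :=
  (summable_abs_pcoef a v).of_abs

lemma Sfun_eq (a z : ℝ) :
    Sfun a z = evenC a * kummerM (-a/2) (1/2) (z^2/2)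
      + oddC a * z * kummerM (1/2 - a/2) (3/2) (z^2/2) := by
  have he : HasSum (fun n => pcoef a (2*n) * z ^ (2*n))
      (evenC a * kummerM (-a/2) (1/2) (z^2/2)) := by
    have h := (summable_mcoef_mul (-a/2) (by norm_num : (0:ℝ) < 1/2) (z^2/2)).hasSum.mul_left
      (evenC a)
    rw [← kummerM_eq_tsum] at h
    · exact h.congr_fun fun n => even_term_eq a z n
  have ho : HasSum (fun n => pcoef a (2*n+1) * z ^ (2*n+1))
      (oddC a * z * kummerM (1/2 - a/2) (3/2) (z^2/2)) := by
    rw [show (1:ℝ)/2 - a/2 = (1-a)/2 by ring]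
    have h := (summable_mcoef_mul ((1-a)/2) (by norm_num : (0:ℝ) < 3/2) (z^2/2)).hasSum.mul_left
      (oddC a * z)
    rw [← kummerM_eq_tsum] at h
    exact h.congr_fun fun n => odd_term_eq a z n
  exact (HasSum.even_add_odd (f := fun k => pcoef a k * z ^ k) he ho).tsum_eq

lemma summable_abs_shift (c : ℕ → ℝ) (hc : ∀ v : ℝ, Summable fun n => |c n * v ^ n|) (v : ℝ) :
    Summable fun n : ℕ => |((n:ℝ)+1) * c (n+1) * v ^ n| := by
  set w : ℝ := 2 * (|v| + 1) with hw
  have hw1 : 1 ≤ w := by have := abs_nonneg v; simp only [hw]; linarith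
  have hsum : Summable fun n => |c (n+1) * w ^ (n+1)| :=
    (summable_nat_add_iff (f := fun n => |c n * w ^ n|) 1).2 (hc w)
  refine Summable.of_nonneg_of_le (fun n => abs_nonneg _) (fun n => ?_) hsum
  have h1 : ((n:ℝ)+1) ≤ 2 ^ n := by
    exact_mod_cast Nat.lt_two_pow_self (n := n)
  have h2 : |v| ^ n ≤ (|v| + 1) ^ n :=
    pow_le_pow_left₀ (abs_nonneg v) (by linarith) n
  have h3 : |((n:ℝ)+1) * c (n+1) * v ^ n| = ((n:ℝ)+1) * |c (n+1)| * |v| ^ n := by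
    rw [abs_mul, abs_mul, abs_pow, abs_of_nonneg (by positivity : (0:ℝ) ≤ (n:ℝ)+1)]
  have h4 : |c (n+1) * w ^ (n+1)| = |c (n+1)| * w ^ (n+1) := by
    rw [abs_mul, abs_pow, abs_of_nonneg (by linarith : (0:ℝ) ≤ w)]
  rw [h3, h4]
  have h5 : ((n:ℝ)+1) * |v| ^ n ≤ w ^ (n+1) := by
    calc ((n:ℝ)+1) * |v| ^ n ≤ 2 ^ n * (|v| + 1) ^ n := by
          apply mul_le_mul h1 h2 (by positivity) (by positivity)
      _ = w ^ n := by rw [hw, mul_pow]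
      _ ≤ w ^ (n+1) := by
          nth_rewrite 1 [← mul_one (w ^ n)]
          rw [pow_succ]
          exact mul_le_mul_of_nonneg_left (by linarith) (by positivity)
  calc ((n:ℝ)+1) * |c (n+1)| * |v| ^ n = |c (n+1)| * (((n:ℝ)+1) * |v| ^ n) := by ring
    _ ≤ |c (n+1)| * w ^ (n+1) := mul_le_mul_of_nonneg_left h5 (abs_nonneg _)

lemma Dsum_eq (a z : ℝ) :
    ∑' k : ℕ, ((k:ℝ)+1) * pcoef a (k+1) * z ^ k
      = z * Sfun a z - Real.sqrt 2 * Sfun (a+1) z := by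
  have hs1 : Summable fun k : ℕ => ((k:ℝ)+1) * pcoef a (k+1) * z ^ k :=
    (summable_abs_shift (pcoef a) (summable_abs_pcoef a) z).of_abs
  have hs2 : Summable fun k : ℕ => Real.sqrt 2 * (pcoef (a+1) k * z ^ k) :=
    (summable_pcoef (a+1) z).mul_left _
  have hB : Summable fun k : ℕ => ((k:ℝ)+1) * pcoef a (k+1) * z ^ k
      + Real.sqrt 2 * (pcoef (a+1) k * z ^ k) := hs1.add hs2
  have key : ∑' k : ℕ, (((k:ℝ)+1) * pcoef a (k+1) * z ^ k
      + Real.sqrt 2 * (pcoef (a+1) k * z ^ k)) = z * Sfun a z := by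
    rw [Summable.tsum_eq_zero_add hB]
    have hB0 : (((0:ℕ):ℝ)+1) * pcoef a (0+1) * z ^ (0:ℕ)
        + Real.sqrt 2 * (pcoef (a+1) 0 * z ^ (0:ℕ)) = 0 := by
      have := A0 a
      push_cast
      simpa using this
    rw [hB0, zero_add]
    have hterm : ∀ k : ℕ, (((k+1:ℕ):ℝ)+1) * pcoef a ((k+1)+1) * z ^ (k+1)
        + Real.sqrt 2 * (pcoef (a+1) (k+1) * z ^ (k+1))
        = z * (pcoef a k * z ^ k) := by
      intro k
      have h := Arec a k
      have : (((k+1:ℕ):ℝ)+1) * pcoef a ((k+1)+1) * z ^ (k+1)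
          + Real.sqrt 2 * (pcoef (a+1) (k+1) * z ^ (k+1))
          = (((k:ℝ)+2) * pcoef a (k+2) + Real.sqrt 2 * pcoef (a+1) (k+1)) * z ^ (k+1) := by
        push_cast
        ring
      rw [this, h, pow_succ]
      ring
    rw [tsum_congr hterm, tsum_mul_left]
    rfl
  have split : ∑' k : ℕ, (((k:ℝ)+1) * pcoef a (k+1) * z ^ k
      + Real.sqrt 2 * (pcoef (a+1) k * z ^ k))
      = (∑' k : ℕ, ((k:ℝ)+1) * pcoef a (k+1) * z ^ k)
        + Real.sqrt 2 * Sfun (a+1) z := by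
    rw [Summable.tsum_add hs1 hs2, tsum_mul_left]
    rfl
  rw [split] at key
  linarith

open FormalMultilinearSeries in
set_option maxHeartbeats 1000000 in
lemma hasDerivAt_psum (c : ℕ → ℝ) (hc : ∀ v : ℝ, Summable fun n => |c n * v ^ n|) (z : ℝ) :
    HasDerivAt (fun w : ℝ => ∑' n : ℕ, c n * w ^ n)
      (∑' n : ℕ, ((n:ℝ)+1) * c (n+1) * z ^ n) z := by
  classical
  set c' : ℕ → ℝ := fun n => ((n:ℝ)+1) * c (n+1) with hc'def
  have hc' : ∀ v : ℝ, Summable fun n => |c' n * v ^ n| := by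
    intro v
    have := summable_abs_shift c hc v
    refine this.congr fun n => ?_
    rw [hc'def]
  set p : FormalMultilinearSeries ℝ ℝ ℝ := ofScalars ℝ c with hp
  set q : FormalMultilinearSeries ℝ ℝ ℝ := ofScalars ℝ c' with hq
  have hnorm : ∀ (d : ℕ → ℝ) (n : ℕ), ‖ofScalars ℝ d n‖ = |d n| := fun d n =>
    (ofScalars_norm ℝ d n).trans (Real.norm_eq_abs (d n))
  have hrad : ∀ (d : ℕ → ℝ), (∀ v : ℝ, Summable fun n => |d n * v ^ n|) →
      (ofScalars ℝ d).radius = ⊤ := by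
    intro d hd
    apply FormalMultilinearSeries.radius_eq_top_of_summable_norm
    intro r
    refine ((hd r).congr fun n => ?_)
    rw [hnorm, abs_mul, abs_pow, abs_of_nonneg r.coe_nonneg]
  have hpr : p.radius = ⊤ := hrad c hc
  have hqr : q.radius = ⊤ := hrad c' hc'
  have hpball : HasFPowerSeriesOnBall p.sum p 0 ⊤ := by
    have := p.hasFPowerSeriesOnBall (by rw [hpr]; exact ENNReal.zero_lt_top)
    rwa [hpr] at this
  have hqball : HasFPowerSeriesOnBall q.sum q 0 ⊤ := by
    have := q.hasFPowerSeriesOnBall (by rw [hqr]; exact ENNReal.zero_lt_top)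
    rwa [hqr] at this
  have hmem : ∀ y : ℝ, y ∈ Metric.eball (0:ℝ) ⊤ := by
    intro y; simp [Metric.eball_top]
  have hsum_eq : ∀ (d : ℕ → ℝ) (w : ℝ), (ofScalars ℝ d).sum w = ∑' n : ℕ, d n * w ^ n := by
    intro d w
    rw [show (ofScalars ℝ d).sum w = ofScalarsSum d w from rfl, ofScalars_sum_eq]
    simp [smul_eq_mul]
  -- analyticity
  have hpanal : AnalyticOnNhd ℝ p.sum Set.univ := fun y _ =>
    hpball.analyticAt_of_mem (hmem y)
  have hqanal : AnalyticOnNhd ℝ q.sum Set.univ := fun y _ =>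
    hqball.analyticAt_of_mem (hmem y)
  -- derivative series
  have hfd : HasFPowerSeriesOnBall (fderiv ℝ p.sum) p.derivSeries 0 ⊤ := hpball.fderiv
  -- pointwise identity away from 0
  have hkey : ∀ y : ℝ, y ≠ 0 → deriv p.sum y = q.sum y := by
    intro y hy
    have hs1 : HasSum (fun n => p.derivSeries n fun _ => y) (fderiv ℝ p.sum (0 + y)) :=
      hfd.hasSum (hmem y)
    have hs2 : HasSum (fun n => (p.derivSeries n fun _ => y) y) (fderiv ℝ p.sum (0 + y) y) :=
      (ContinuousLinearMap.apply ℝ ℝ y).hasSum (f := fun n => p.derivSeries n fun _ => y) hs1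
    have hterm : ∀ n : ℕ, (p.derivSeries n fun _ => y) y = y * (c' n * y ^ n) := by
      intro n
      rw [p.derivSeries_apply_diag n y]
      have : p (n+1) (fun _ => y) = c (n+1) * y ^ (n+1) := by
        rw [hp, ofScalars_apply_eq, smul_eq_mul]
      rw [this]
      simp only [nsmul_eq_mul, hc'def]
      push_cast
      ring
    have hs3 : HasSum (fun n => y * (c' n * y ^ n)) (fderiv ℝ p.sum (0 + y) y) :=
      hs2.congr_fun (fun n => (hterm n).symm)
    have hs4 : HasSum (fun n => q n fun _ => y) (q.sum (0 + y)) := hqball.hasSum (hmem y)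
    have hs5 : HasSum (fun n => y * (c' n * y ^ n)) (y * q.sum (0 + y)) := by
      refine (hs4.mul_left y).congr_fun fun n => ?_
      rw [hq, ofScalars_apply_eq, smul_eq_mul]
    have heq : fderiv ℝ p.sum (0 + y) y = y * q.sum (0 + y) := hs3.unique hs5
    rw [zero_add] at heq
    have hfr : fderiv ℝ p.sum y y = y * deriv p.sum y := by
      have h1 : deriv p.sum y = fderiv ℝ p.sum y 1 := rfl
      calc fderiv ℝ p.sum y y = fderiv ℝ p.sum y (y • (1:ℝ)) := by
            rw [smul_eq_mul, mul_one]
        _ = y • fderiv ℝ p.sum y 1 := ContinuousLinearMap.map_smul _ _ _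
        _ = y * deriv p.sum y := by rw [smul_eq_mul, h1]
    rw [hfr] at heq
    exact mul_left_cancel₀ hy heq
  have hderiv_cont : Continuous (deriv p.sum) :=
    (hpanal.deriv).continuous
  have hq_cont : Continuous q.sum := hqanal.continuous
  have hext : deriv p.sum = q.sum := by
    apply Continuous.ext_on (dense_compl_singleton (0:ℝ)) hderiv_cont hq_cont
    intro y hy
    exact hkey y hy
  have hdiff : DifferentiableAt ℝ p.sum z := (hpanal z trivial).differentiableAt
  have hda : HasDerivAt p.sum (q.sum z) z := by
    have := hdiff.hasDerivAt
    rwa [show deriv p.sum z = q.sum z from congrFun hext z] at this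
  have hfun : (fun w : ℝ => ∑' n : ℕ, c n * w ^ n) = p.sum := by
    funext w; rw [hsum_eq c w]
  rw [hfun, show (∑' n : ℕ, ((n:ℝ)+1) * c (n+1) * z ^ n) = q.sum z by
    rw [hsum_eq c' z]]
  exact hda

lemma Sfun_hasDerivAt (a z : ℝ) :
    HasDerivAt (fun w => Sfun a w)
      (z * Sfun a z - Real.sqrt 2 * Sfun (a+1) z) z := by
  have h := hasDerivAt_psum (pcoef a) (summable_abs_pcoef a) z
  rw [Dsum_eq] at h
  exact h

noncomputable def Cc (a : ℝ) : ℝ := (1 / Real.sqrt π) * (2:ℝ) ^ (a/2)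

lemma Cc_succ (a : ℝ) : Cc (a+1) = Real.sqrt 2 * Cc a := by
  unfold Cc
  rw [show (a+1)/2 = a/2 + 1/2 by ring, Real.rpow_add (by norm_num : (0:ℝ) < 2)]
  rw [show Real.sqrt 2 = (2:ℝ) ^ ((1:ℝ)/2) from Real.sqrt_eq_rpow 2]
  ring

lemma pcD_eq (a z : ℝ) : pcD a z = Cc a * Real.exp (-z^2/4) * Sfun a z := by
  simp only [pcD, pcU]
  rw [show -(-a - 1/2) - 1/2 = a by ring]
  rw [Sfun_eq]
  unfold Cc evenC oddC
  ring

lemma split (a z : ℝ) :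
    Real.exp (-z^2/4) * pcD a z = Cc a * (Real.exp (-z^2/2) * Sfun a z) := by
  rw [pcD_eq]
  rw [show Real.exp (-z^2/2) = Real.exp (-z^2/4) * Real.exp (-z^2/4) by
    rw [← Real.exp_add]; ring_nf]
  ring

lemma step (a z : ℝ) :
    HasDerivAt (fun w => Real.exp (-w^2/4) * pcD a w)
      (-(Real.exp (-z^2/4) * pcD (a+1) z)) z := by
  have hS := Sfun_hasDerivAt a z
  have h1 : HasDerivAt (fun w : ℝ => -w^2/2) (-z) z := by
    have h := ((hasDerivAt_pow 2 z).neg.div_const 2)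
    refine h.congr_deriv ?_
    simp
    ring
  have hE : HasDerivAt (fun w : ℝ => Real.exp (-w^2/2)) (-z * Real.exp (-z^2/2)) z := by
    have := h1.exp
    simpa [mul_comm] using this
  have hprod := (hE.mul hS).const_mul (Cc a)
  have hfun : (fun w => Real.exp (-w^2/4) * pcD a w)
      = fun w => Cc a * (Real.exp (-w^2/2) * Sfun a w) := funext fun w => split a w
  rw [hfun]
  refine hprod.congr_deriv ?_
  rw [split (a+1) z, Cc_succ]
  ring


theorem stmt9 (m : ℕ) (a z : ℝ) :
    iteratedDeriv m (fun w : ℝ => Real.exp (-w ^ 2 / 4) * pcD a w) z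
      = (-1) ^ m * Real.exp (-z ^ 2 / 4) * pcD (a + m) z := by
  induction m generalizing a z with
  | zero => simp
  | succ n ih =>
    rw [iteratedDeriv_succ']
    have hder : (deriv fun w : ℝ => Real.exp (-w ^ 2 / 4) * pcD a w)
        = fun w => -(Real.exp (-w ^ 2 / 4) * pcD (a+1) w) :=
      funext fun w => (step a w).deriv
    rw [hder, iteratedDeriv_fun_neg, ih]
    push_cast
    rw [show a + ((n:ℝ)+1) = a + 1 + n by ring]
    ring
end

section
/- For all real α, x ∈ ℝ and t > 0, ∂/∂t H_α(x,t) = −(α(α−1)/2) · H_{α−2}(x,t). -/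
open Real MeasureTheory

noncomputable def kcoef (a b : ℝ) (n : ℕ) : ℝ :=
  (ascPochhammer ℝ n).eval a / ((ascPochhammer ℝ n).eval b * (n.factorial : ℝ))

lemma kummerM_eq (a b z : ℝ) : kummerM a b z = ∑' n : ℕ, kcoef a b n * z ^ n := by
  unfold kummerM kcoef
  congr 1; funext n; ring

lemma poch_succ (a : ℝ) (n : ℕ) :
    (ascPochhammer ℝ (n+1)).eval a = (ascPochhammer ℝ n).eval a * (a + n) :=
  ascPochhammer_succ_eval n a

lemma poch_succ' (a : ℝ) (n : ℕ) :
    (ascPochhammer ℝ (n+1)).eval a = a * (ascPochhammer ℝ n).eval (a + 1) := by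
  rw [ascPochhammer_succ_left, Polynomial.eval_mul, Polynomial.eval_X, Polynomial.eval_comp]
  simp

lemma kcoef_mul (a b : ℝ) (hb : 0 < b) (n : ℕ) :
    kcoef a b n * (a + n) = a * kcoef (a+1) b n := by
  have h1 : (0:ℝ) < (ascPochhammer ℝ n).eval b := ascPochhammer_pos n b hb
  have h2 : (0:ℝ) < (n.factorial : ℝ) := by positivity
  unfold kcoef
  rw [div_mul_eq_mul_div, ← poch_succ, poch_succ', mul_div_assoc]

lemma kcoef_succ (a b : ℝ) (hb : 0 < b) (n : ℕ) (r : ℝ) :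
    kcoef a b (n+1) * r ^ (n+1) =
      (kcoef a b n * r ^ n) * ((a + n) * r / ((b + n) * (n+1))) := by
  have h1 : ((ascPochhammer ℝ n).eval b) ≠ 0 := (ascPochhammer_pos n b hb).ne'
  have h2 : ((n.factorial : ℝ)) ≠ 0 := by positivity
  have h3 : (b + (n:ℝ)) ≠ 0 := by positivity
  have h4 : ((n:ℝ) + 1) ≠ 0 := by positivity
  unfold kcoef
  rw [poch_succ a, poch_succ b, Nat.factorial_succ]
  push_cast
  field_simp
  ring

/-- summability of the Kummer-type series -/
lemma ksummable (a b : ℝ) (hb : 0 < b) (r : ℝ) :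
    Summable (fun n : ℕ => kcoef a b n * r ^ n) := by
  apply summable_of_ratio_norm_eventually_le (r := 1/2) (by norm_num)
  have hev : ∀ᶠ n : ℕ in Filter.atTop, (⌈max (max 1 |a|) (4*|r|)⌉₊ : ℕ) ≤ n :=
    Filter.eventually_ge_atTop _
  filter_upwards [hev] with n hn
  have hn' : max (max 1 |a|) (4*|r|) ≤ (n:ℝ) := by
    exact_mod_cast (Nat.ceil_le).mp hn
  have hn1 : (1:ℝ) ≤ n := le_trans (le_trans (le_max_left _ _) (le_max_left _ _)) hn'
  have hna : |a| ≤ (n:ℝ) := le_trans (le_trans (le_max_right _ _) (le_max_left _ _)) hn'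
  have hnr : 4*|r| ≤ (n:ℝ) := le_trans (le_max_right _ _) hn'
  rw [kcoef_succ a b hb n r, norm_mul]
  rw [mul_comm ((1:ℝ)/2)]
  apply mul_le_mul_of_nonneg_left _ (norm_nonneg _)
  -- ‖(a+n)*r/((b+n)*(n+1))‖ ≤ 1/2
  have hbn : (0:ℝ) < (b + n) * (n + 1) := by positivity
  rw [norm_div, norm_mul, Real.norm_eq_abs, Real.norm_eq_abs, Real.norm_eq_abs,
    abs_of_pos hbn]
  rw [div_le_iff₀ hbn]
  have h1 : |a + (n:ℝ)| ≤ 2 * n := by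
    calc |a + (n:ℝ)| ≤ |a| + n := by
          simpa [abs_of_nonneg (by positivity : (0:ℝ) ≤ (n:ℝ))] using abs_add_le a (n:ℝ)
      _ ≤ 2 * n := by linarith
  have h2 : (n:ℝ) ≤ b + n := by linarith
  have h3 : 4 * |r| ≤ n + 1 := by linarith
  calc |a + (n:ℝ)| * |r| ≤ (2*n) * |r| := by
        apply mul_le_mul_of_nonneg_right h1 (abs_nonneg r)
    _ ≤ 1/2 * ((b+n) * (n+1)) := by nlinarith [abs_nonneg r]


lemma rpow_bound {l h y : ℝ} (e : ℝ) (hl : 0 < l) (hly : l ≤ y) (hyh : y ≤ h) :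
    y ^ e ≤ l ^ e + h ^ e := by
  rcases le_or_gt 0 e with he | he
  · have h1 : y ^ e ≤ h ^ e := Real.rpow_le_rpow (by linarith) hyh he
    have h2 : (0:ℝ) ≤ l ^ e := Real.rpow_nonneg hl.le e
    linarith
  · have h1 : y ^ e ≤ l ^ e := Real.rpow_le_rpow_of_nonpos hl hly he.le
    have h2 : (0:ℝ) ≤ h ^ e := Real.rpow_nonneg (by linarith) e
    linarith

lemma rpow_split {s : ℝ} (hs : 0 < s) (p : ℝ) (n : ℕ) :
    s ^ (p - n) = s ^ p * (s⁻¹) ^ n := by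
  rw [Real.rpow_sub hs, Real.rpow_natCast, div_eq_mul_inv, inv_pow]

/-- rewriting of one term -/
lemma term_eq (a b c : ℝ) (hb : 0 < b) {s : ℝ} (hs : 0 < s) (n : ℕ) :
    kcoef a b n * c ^ n * (-a - n) * s ^ (-a - n - 1) =
      (-a * s ^ (-a - 1)) * (kcoef (a+1) b n * (c/s) ^ n) := by
  have h1 : (-a - (n:ℝ) - 1) = (-a - 1) - n := by ring
  rw [h1, rpow_split hs, div_pow]
  have h2 : kcoef a b n * (-a - n) = -(a * kcoef (a+1) b n) := by
    rw [← kcoef_mul a b hb n]; ring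
  have h3 : (c^n / s^n : ℝ) = c^n * (s⁻¹)^n := by
    rw [div_eq_mul_inv, inv_pow]
  rw [h3]
  calc kcoef a b n * c ^ n * (-a - n) * (s ^ (-a-1) * (s⁻¹) ^ n)
      = (kcoef a b n * (-a - n)) * c ^ n * (s ^ (-a-1) * (s⁻¹) ^ n) := by ring
    _ = _ := by rw [h2]; ring

lemma kder (a b c : ℝ) (hb : 0 < b) {t : ℝ} (ht : 0 < t) :
    HasDerivAt (fun s : ℝ => s ^ (-a) * kummerM a b (c / s))
      (-a * t ^ (-a-1) * kummerM (a+1) b (c/t)) t := by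
  set g : ℕ → ℝ → ℝ := fun n s => kcoef a b n * c ^ n * s ^ (-a - n) with hg_def
  set g' : ℕ → ℝ → ℝ := fun n s => kcoef a b n * c ^ n * (-a - n) * s ^ (-a - n - 1)
    with hg'_def
  set u : ℕ → ℝ := fun n =>
    |a| * |kcoef (a+1) b n * (c/(t/2)) ^ n| * (t/2) ^ (-a-1) +
    |a| * |kcoef (a+1) b n * (c/(t+1)) ^ n| * (t+1) ^ (-a-1) with hu_def
  have ht2 : (0:ℝ) < t/2 := by linarith
  have ht1 : (0:ℝ) < t+1 := by linarith
  have hu : Summable u := by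
    apply Summable.add
    · exact (((ksummable (a+1) b hb (c/(t/2))).abs.mul_left |a|).mul_right _)
    · exact (((ksummable (a+1) b hb (c/(t+1))).abs.mul_left |a|).mul_right _)
  have hterm : ∀ (p : ℝ) (hp : 0 < p) (n : ℕ),
      |kcoef a b n * c ^ n * (-a - n)| * p ^ (-a - n - 1) =
        |a| * |kcoef (a+1) b n * (c/p) ^ n| * p ^ (-a-1) := by
    intro p hp n
    have h1 : (-a - (n:ℝ) - 1) = (-a - 1) - n := by ring
    rw [h1, rpow_split hp]
    have h2 : kcoef a b n * (-a - n) = -(a * kcoef (a+1) b n) := by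
      rw [← kcoef_mul a b hb n]; ring
    have h3 : kcoef a b n * c ^ n * (-a - n) = -(a * (kcoef (a+1) b n * c^n)) := by
      calc kcoef a b n * c ^ n * (-a - n) = (kcoef a b n * (-a-n)) * c^n := by ring
        _ = _ := by rw [h2]; ring
    have h4 : |kcoef (a+1) b n * (c/p)^n| = |kcoef (a+1) b n| * (|c|^n * (p⁻¹)^n) := by
      rw [abs_mul, abs_pow, abs_div, abs_of_pos hp, div_eq_mul_inv, mul_pow, inv_pow]
    rw [h3, abs_neg, abs_mul, abs_mul, abs_pow, h4]
    ring
  have hmem : t ∈ Set.Ioo (t/2) (t+1) := ⟨by linarith, by linarith⟩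
  have hder : ∀ (n : ℕ), ∀ y ∈ Set.Ioo (t/2) (t+1), HasDerivAt (g n) (g' n y) y := by
    intro n y hy
    have hy0 : (0:ℝ) < y := lt_trans ht2 hy.1
    have h : HasDerivAt (fun y : ℝ => kcoef a b n * c ^ n * y ^ (-a - (n:ℝ)))
        (kcoef a b n * c ^ n * ((-a - (n:ℝ)) * y ^ (-a - (n:ℝ) - 1))) y := (Real.hasDerivAt_rpow_const (x := y) (p := -a - n) (Or.inl hy0.ne')).const_mul
      (kcoef a b n * c ^ n)
    convert h using 1
    simp only [hg'_def]; ring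
  have hbound : ∀ (n : ℕ), ∀ y ∈ Set.Ioo (t/2) (t+1), ‖g' n y‖ ≤ u n := by
    intro n y hy
    have hy0 : (0:ℝ) < y := lt_trans ht2 hy.1
    simp only [hg'_def, hu_def]
    rw [Real.norm_eq_abs, abs_mul, abs_of_pos (Real.rpow_pos_of_pos hy0 _)]
    calc |kcoef a b n * c ^ n * (-a - ↑n)| * y ^ (-a - ↑n - 1)
        ≤ |kcoef a b n * c ^ n * (-a - ↑n)| * ((t/2) ^ (-a - ↑n - 1) + (t+1) ^ (-a - ↑n - 1)) := by
          apply mul_le_mul_of_nonneg_left _ (abs_nonneg _)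
          exact rpow_bound _ ht2 hy.1.le hy.2.le
      _ = _ := by rw [mul_add, hterm _ ht2 n, hterm _ ht1 n]
  have hsum0 : Summable (fun n => g n t) := by
    have heq : (fun n => g n t) = fun n => (kcoef a b n * (c/t)^n) * t ^ (-a) := by
      funext n
      simp only [hg_def]
      rw [rpow_split ht (-a) n, div_pow, div_eq_mul_inv, inv_pow]
      ring
    rw [heq]
    exact (ksummable a b hb (c/t)).mul_right _
  have key : HasDerivAt (fun z => ∑' n, g n z) (∑' n, g' n t) t :=
    hasDerivAt_tsum_of_isPreconnected hu isOpen_Ioo (convex_Ioo _ _).isPreconnected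
      hder hbound hmem hsum0 hmem
  have heq : (fun s : ℝ => s ^ (-a) * kummerM a b (c / s)) =ᶠ[nhds t] (fun z => ∑' n, g n z) := by
    filter_upwards [Ioi_mem_nhds ht] with s hs
    have hs0 : (0:ℝ) < s := hs
    rw [kummerM_eq, ← tsum_mul_left]
    congr 1; funext n
    simp only [hg_def]
    rw [div_pow, show (-a - (n:ℝ)) = -a - n from rfl, rpow_split hs0 (-a) n]
    rw [div_eq_mul_inv, inv_pow]; ring
  have hval : (∑' n, g' n t) = -a * t ^ (-a-1) * kummerM (a+1) b (c/t) := by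
    rw [kummerM_eq, ← tsum_mul_left]
    congr 1; funext n
    simp only [hg'_def]
    exact term_eq a b c hb ht n
  rw [hval] at key
  exact key.congr_of_eventuallyEq heq

lemma Hfrac_rep (α x : ℝ) {t : ℝ} (ht : 0 < t) :
    Hfrac α x t =
      ((1/Real.sqrt π) * (2:ℝ)^(α/2) * (Real.cos (π*α/2) * Real.Gamma ((α+1)/2))) *
        (t ^ (α/2) * kummerM (-α/2) (1/2) (x^2/2/t)) +
      ((1/Real.sqrt π) * (2:ℝ)^(α/2) * (Real.sqrt 2 * x * Real.sin (π*α/2) * Real.Gamma (α/2+1))) *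
        (t ^ (α/2 - 1/2) * kummerM (1/2 - α/2) (3/2) (x^2/2/t)) := by
  have ht' : t ≠ 0 := ht.ne'
  unfold Hfrac pcD pcU
  rw [show (-(-α - 1/2) - 1/2 : ℝ) = α by ring]
  have hsq : (x / Real.sqrt t)^2 = x^2/t := by
    rw [div_pow, Real.sq_sqrt ht.le]
  rw [hsq, show (x^2/t/2 : ℝ) = x^2/2/t by ring]
  have hE : Real.exp (x^2/(4*t)) * Real.exp (-(x^2/t)/4) = 1 := by
    rw [← Real.exp_add, show x^2/(4*t) + -(x^2/t)/4 = 0 by field_simp; ring, Real.exp_zero]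
  have hxs : t^(α/2) * (x / Real.sqrt t) = x * t^(α/2 - 1/2) := by
    rw [Real.sqrt_eq_rpow, Real.rpow_sub ht]
    field_simp
  set M1 := kummerM (-α/2) (1/2) (x^2/2/t)
  set M2 := kummerM (1/2 - α/2) (3/2) (x^2/2/t)
  set E := Real.exp (x^2/(4*t))
  set E' := Real.exp (-(x^2/t)/4)
  set S := Real.sqrt t
  linear_combination
    ((1/Real.sqrt π) * (2:ℝ)^(α/2) *
      (Real.cos (π*α/2) * Real.Gamma ((α+1)/2) * M1 * t^(α/2) +
       Real.sqrt 2 * Real.sin (π*α/2) * Real.Gamma (α/2+1) * M2 * (t^(α/2) * (x/S)))) * hE +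
    ((1/Real.sqrt π) * (2:ℝ)^(α/2) * Real.sqrt 2 * Real.sin (π*α/2) * Real.Gamma (α/2+1) * M2) * hxs

theorem stmt11 (α x t : ℝ) (ht : 0 < t) :
    deriv (fun s : ℝ => Hfrac α x s) t = -(α * (α - 1) / 2) * Hfrac (α - 2) x t := by
  set c := x^2/2 with hc
  set C1 := (1/Real.sqrt π) * (2:ℝ)^(α/2) * (Real.cos (π*α/2) * Real.Gamma ((α+1)/2)) with hC1
  set C2 := (1/Real.sqrt π) * (2:ℝ)^(α/2) *
      (Real.sqrt 2 * x * Real.sin (π*α/2) * Real.Gamma (α/2+1)) with hC2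
  have hk1 := kder (-(α/2)) (1/2) c one_half_pos ht
  have hk2 := kder (1/2 - α/2) (3/2) c (by norm_num) ht
  rw [show (-(-(α/2)) : ℝ) = α/2 by ring] at hk1
  rw [show (-(1/2 - α/2) : ℝ) = α/2 - 1/2 by ring] at hk2
  have hcomb := (hk1.const_mul C1).add (hk2.const_mul C2)
  have hder : HasDerivAt (fun s : ℝ => Hfrac α x s)
      (C1 * (α/2 * t^(α/2 - 1) * kummerM (-(α/2) + 1) (1/2) (c/t)) +
       C2 * ((α/2 - 1/2) * t^(α/2 - 1/2 - 1) * kummerM (1/2 - α/2 + 1) (3/2) (c/t))) t := by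
    refine HasDerivAt.congr_of_eventuallyEq hcomb ?_
    filter_upwards [Ioi_mem_nhds ht] with s hs
    have := Hfrac_rep α x (show (0:ℝ) < s from hs)
    rw [this, hC1, hC2, hc]
    rw [show (-(α/2) : ℝ) = -α/2 by ring]
    rfl
  rw [hder.deriv, Hfrac_rep (α-2) x ht]
  -- normalize kummerM arguments and exponents
  rw [show (-(α/2) + 1 : ℝ) = -(α-2)/2 by ring,
      show (1/2 - α/2 + 1 : ℝ) = 1/2 - (α-2)/2 by ring,
      show (α/2 - 1 : ℝ) = (α-2)/2 by ring,
      show (α/2 - 1/2 - 1 : ℝ) = (α-2)/2 - 1/2 by ring]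
  set M1 := kummerM (-(α-2)/2) (1/2) (c/t)
  set M2 := kummerM (1/2 - (α-2)/2) (3/2) (c/t)
  -- trig and Gamma identities
  have h2pow : (2:ℝ)^((α-2)/2) = 2^(α/2) / 2 := by
    rw [show ((α-2)/2 : ℝ) = α/2 - 1 by ring, Real.rpow_sub two_pos, Real.rpow_one]
  have hcos : Real.cos (π*(α-2)/2) = -Real.cos (π*α/2) := by
    rw [show (π*(α-2)/2 : ℝ) = π*α/2 - π by ring, Real.cos_sub_pi]
  have hsin : Real.sin (π*(α-2)/2) = -Real.sin (π*α/2) := by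
    rw [show (π*(α-2)/2 : ℝ) = π*α/2 - π by ring, Real.sin_sub_pi]
  have hG1 : Real.cos (π*α/2) * Real.Gamma ((α+1)/2) =
      Real.cos (π*α/2) * (((α-1)/2) * Real.Gamma ((α-1)/2)) := by
    rcases eq_or_ne α 1 with h1 | h1
    · rw [h1]
      norm_num [Real.cos_pi_div_two]
    · congr 1
      rw [show ((α+1)/2 : ℝ) = (α-1)/2 + 1 by ring]
      exact Real.Gamma_add_one (by
        intro h; apply h1; field_simp at h; linarith)
  have hG2 : Real.sin (π*α/2) * Real.Gamma (α/2+1) =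
      Real.sin (π*α/2) * ((α/2) * Real.Gamma (α/2)) := by
    rcases eq_or_ne α 0 with h0 | h0
    · rw [h0]; norm_num
    · congr 1
      exact Real.Gamma_add_one (by
        intro h; apply h0; field_simp at h; linarith)
  rw [show ((α-2+1)/2 : ℝ) = (α-1)/2 by ring, show ((α-2)/2+1 : ℝ) = α/2 by ring,
      h2pow, hcos, hsin]
  set T1 := t ^ ((α-2)/2)
  set T2 := t ^ ((α-2)/2 - 1/2)
  set G1 := Real.Gamma ((α-1)/2)
  set G2 := Real.Gamma (α/2)
  set sp := (1:ℝ)/Real.sqrt π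
  set p2 := (2:ℝ)^(α/2)
  linear_combination (sp * p2 * (α/2) * T1 * M1) * hG1 +
    (sp * p2 * Real.sqrt 2 * x * ((α-1)/2) * T2 * M2) * hG2
end
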